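/- In the iterated refinement process for a graphon W with mean square density at most 1: if ε₁ > ε₂ > ⋯ with ε_{i+1} ≤ ε_i/2, and k₁ ≤ k₂ ≤ ⋯ ≤ k_m are nonnegative integers (k₀ = 0) with ∑_{i=1}^m (k_i − k_{i−1})·ε_i² ≤ 1, and k_i ≥ c·ε_i^(-2) for all i and a fixed c > 0, then m < 4/(3c) + 1. -/

import Mathlib

theorem stmt14 (m : ℕ) (c : ℝ) (hc : 0 < c) (ε : ℕ → ℝ) (k : ℕ → ℕ)
    (hεpos : ∀ i, 0 < ε i) (hεdec : ∀ i, ε (i+1) ≤ ε i / 2)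
    (hk0 : k 0 = 0) (hmono : Monotone k)
    (hsum : ∑ i ∈ Finset.Icc 1 m, ((k i : ℝ) - k (i-1)) * (ε i)^2 ≤ 1)
    (hki : ∀ i ∈ Finset.Icc 1 m, c / (ε i)^2 ≤ (k i : ℝ)) :
    (m : ℝ) < 4/(3*c) + 1 := by
  have hε2 : ∀ i, 0 < (ε i)^2 := fun i => pow_pos (hεpos i) 2
  -- k i * ε i ^ 2 ≥ c for i ∈ Icc 1 m
  have hkε : ∀ i ∈ Finset.Icc 1 m, c ≤ (k i : ℝ) * (ε i)^2 := by
    intro i hi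
    have := hki i hi
    rw [div_le_iff₀ (hε2 i)] at this
    linarith
  -- ε (i+1)^2 ≤ ε i ^2 / 4
  have hεq : ∀ i, (ε (i+1))^2 ≤ (ε i)^2 / 4 := by
    intro i
    have h1 := hεdec i
    have h2 := (hεpos (i+1)).le
    nlinarith [sq_nonneg (ε i - 2 * ε (i+1))]
  have aux : ∀ n, n ≤ m →
      3*c/4 * n + (k n : ℝ) * (ε n)^2 / 4 ≤
        ∑ i ∈ Finset.Icc 1 n, ((k i : ℝ) - k (i-1)) * (ε i)^2 := by
    intro n hn
    induction n with
    | zero => simp [hk0]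
    | succ n ih =>
      have hn' : n ≤ m := Nat.le_of_succ_le hn
      have ih' := ih hn'
      rw [Finset.sum_Icc_succ_top (Nat.one_le_iff_ne_zero.mpr (Nat.succ_ne_zero n))]
      have hterm : c ≤ (k (n+1) : ℝ) * (ε (n+1))^2 :=
        hkε (n+1) (Finset.mem_Icc.mpr ⟨Nat.one_le_iff_ne_zero.mpr (Nat.succ_ne_zero n), hn⟩)
      have hmono' : (k n : ℝ) ≤ k (n+1) := Nat.cast_le.mpr (hmono (Nat.le_succ n))
      have hq := hεq n
      have hknn : (0:ℝ) ≤ k n := Nat.cast_nonneg _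
      simp only [Nat.add_sub_cancel, Nat.cast_succ]
      nlinarith [mul_le_mul_of_nonneg_left hq hknn]
    done
  have h1 : 3*c/4 * m ≤ 1 := by
    have := aux m le_rfl
    have hnn : (0:ℝ) ≤ (k m : ℝ) * (ε m)^2 / 4 := by positivity
    linarith
  have h3c : 0 < 3*c := by linarith
  rw [div_add' _ _ _ (ne_of_gt h3c), lt_div_iff₀ h3c]
  linarith
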